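/- Let d(n) ≤ n with d(n)/n → δ as n → ∞ for δ ∈ (0, 1/2). Set C(n,d) = 2·∑_{r=0}^{d-1} binom(n-1, r). Then C(n+1, d(n)+1) / binom(n, d(n)) converges to 2(1-δ)/(1-2δ) as n → ∞. -/

import Mathlib

open Filter

/-- Ratio of binomial coefficients as a product. -/
lemma choose_ratio_prod (n dd : ℕ) (hdn : dd ≤ n) :
    ∀ k ≤ dd, ((n.choose (dd - k) : ℝ)) =
      (n.choose dd : ℝ) * ∏ j ∈ Finset.range k, ((dd - j : ℕ) : ℝ) / ((n - dd + j + 1 : ℕ) : ℝ) := by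
  intro k
  induction k with
  | zero => simp
  | succ k ih =>
    intro hk
    have hk' : k ≤ dd := Nat.le_of_succ_le hk
    have ihk := ih hk'
    have key : (n.choose (dd - k - 1) : ℝ) * ((n - dd + k + 1 : ℕ) : ℝ)
        = (n.choose (dd - k) : ℝ) * ((dd - k : ℕ) : ℝ) := by
      have h1 : dd - k - 1 + 1 = dd - k := by omega
      have h2 : n - (dd - k - 1) = n - dd + k + 1 := by omega
      have := Nat.choose_succ_right_eq n (dd - k - 1)
      rw [h1, h2] at this
      exact_mod_cast (congrArg (Nat.cast : ℕ → ℝ) this).symm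
    have hden : ((n - dd + k + 1 : ℕ) : ℝ) ≠ 0 := by positivity
    have hstep : (n.choose (dd - (k + 1)) : ℝ)
        = (n.choose (dd - k) : ℝ) * (((dd - k : ℕ) : ℝ) / ((n - dd + k + 1 : ℕ) : ℝ)) := by
      have h3 : dd - (k + 1) = dd - k - 1 := by omega
      rw [h3, ← mul_div_assoc, eq_div_iff hden]
      exact key
    rw [hstep, ihk, Finset.prod_range_succ]
    ring

/-- If `d(n) ≤ n` and `d(n)/n → δ ∈ (0,1/2)`, then with `C(n,d) = 2∑_{r<d} binom(n-1,r)`,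
so `C(n+1, d(n)+1) = 2∑_{l=0}^{d(n)} binom(n,l)`, one has
`C(n+1, d(n)+1)/binom(n, d(n)) → 2(1-δ)/(1-2δ)`. -/
theorem stmt_14 (d : ℕ → ℕ) (δ : ℝ) (hdn : ∀ n, d n ≤ n)
    (hδ0 : 0 < δ) (hδ1 : δ < 1 / 2)
    (hlim : Tendsto (fun n : ℕ => (d n : ℝ) / n) atTop (nhds δ)) :
    Tendsto (fun n : ℕ =>
        (2 * ∑ l ∈ Finset.range (d n + 1), (Nat.choose n l : ℝ)) / Nat.choose n (d n))
      atTop (nhds (2 * (1 - δ) / (1 - 2 * δ))) := by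
  have hδ1' : δ < 1 := by linarith
  have h1δ : (0:ℝ) < 1 - δ := by linarith
  set ρ : ℝ := δ / (1 - δ) with hρ
  have hρ0 : 0 < ρ := div_pos hδ0 h1δ
  have hρ1 : ρ < 1 := by
    rw [hρ, div_lt_one h1δ]; linarith
  set q : ℝ := (1 + ρ) / 2 with hq
  have hρq : ρ < q := by rw [hq]; linarith
  have hq0 : 0 < q := by rw [hq]; linarith
  have hq1 : q < 1 := by rw [hq]; linarith
  set f : ℕ → ℕ → ℝ := fun n k =>
    if k ≤ d n then (n.choose (d n - k) : ℝ) / (n.choose (d n) : ℝ) else 0 with hf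
  have hchoosepos : ∀ n : ℕ, (0:ℝ) < (n.choose (d n) : ℝ) := fun n => by
    exact_mod_cast Nat.choose_pos (hdn n)
  -- d n → ∞
  have hd_top : Tendsto d atTop atTop := by
    rw [← tendsto_natCast_atTop_iff (R := ℝ)]
    have hmul : Tendsto (fun n : ℕ => ((d n : ℝ) / n) * n) atTop atTop :=
      Filter.Tendsto.pos_mul_atTop hδ0 hlim tendsto_natCast_atTop_atTop
    refine hmul.congr' ?_
    filter_upwards [eventually_gt_atTop 0] with n hn
    have : (n:ℝ) ≠ 0 := by positivity
    field_simp
  have hinv : Tendsto (fun n : ℕ => 1 / (n : ℝ)) atTop (nhds 0) :=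
    tendsto_one_div_atTop_nhds_zero_nat
  -- the generic factor limit
  have hfactor : ∀ j : ℕ, Tendsto (fun n : ℕ =>
      ((d n - j : ℕ) : ℝ) / ((n - d n + j + 1 : ℕ) : ℝ)) atTop (nhds ρ) := by
    intro j
    have hnum : Tendsto (fun n : ℕ => (d n : ℝ) / n - (j:ℝ) * (1 / n)) atTop (nhds δ) := by
      have := hlim.sub (hinv.const_mul (j:ℝ))
      simpa using this
    have hden : Tendsto (fun n : ℕ => 1 - (d n : ℝ) / n + ((j:ℝ) + 1) * (1 / n)) atTop
        (nhds (1 - δ)) := by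
      have := ((tendsto_const_nhds (x := (1:ℝ)) (f := atTop)).sub hlim).add
        (hinv.const_mul ((j:ℝ)+1))
      simpa using this
    have hdiv := hnum.div hden (by linarith)
    rw [show δ / (1 - δ) = ρ from rfl] at hdiv
    refine hdiv.congr' ?_
    filter_upwards [hd_top.eventually_ge_atTop j, eventually_gt_atTop 0] with n hjd hn
    have hne : (n:ℝ) ≠ 0 := by positivity
    have h1 : ((d n - j : ℕ) : ℝ) = (d n : ℝ) - j := by
      rw [Nat.cast_sub hjd]
    have h2 : ((n - d n + j + 1 : ℕ) : ℝ) = (n : ℝ) - d n + j + 1 := by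
      push_cast [Nat.cast_sub (hdn n)]
      ring
    have hdnle : (d n : ℝ) ≤ n := by exact_mod_cast hdn n
    have hdenpos : (0:ℝ) < (n:ℝ) - d n + j + 1 := by
      have : (0:ℝ) ≤ (j:ℝ) := Nat.cast_nonneg j
      linarith
    simp only [Pi.div_apply]
    rw [h1, h2]
    have key1 : (d n : ℝ) / n - (j:ℝ) * (1 / n) = ((d n : ℝ) - j) / n := by
      field_simp
    have key2 : 1 - (d n : ℝ) / n + ((j:ℝ) + 1) * (1 / n)
        = ((n:ℝ) - d n + j + 1) / n := by
      field_simp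
      ring
    rw [key1, key2, div_div_div_cancel_right₀ hne]
  -- termwise limit of f
  have hab : ∀ k : ℕ, Tendsto (f · k) atTop (nhds (ρ ^ k)) := by
    intro k
    have hprod : Tendsto (fun n : ℕ => ∏ j ∈ Finset.range k,
        ((d n - j : ℕ) : ℝ) / ((n - d n + j + 1 : ℕ) : ℝ)) atTop
        (nhds (∏ _j ∈ Finset.range k, ρ)) :=
      tendsto_finset_prod _ (fun j _ => hfactor j)
    rw [Finset.prod_const, Finset.card_range] at hprod
    refine hprod.congr' ?_
    filter_upwards [hd_top.eventually_ge_atTop k] with n hkd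
    rw [hf]
    simp only [hkd, if_pos]
    rw [choose_ratio_prod n (d n) (hdn n) k hkd]
    rw [mul_comm, mul_div_assoc, div_self (ne_of_gt (hchoosepos n)), mul_one]
  -- eventual bound
  have h_bound : ∀ᶠ n in atTop, ∀ k, ‖f n k‖ ≤ q ^ k := by
    have hqn : Tendsto (fun n : ℕ => ((d n - 0 : ℕ) : ℝ) / ((n - d n + 0 + 1 : ℕ) : ℝ))
        atTop (nhds ρ) := hfactor 0
    have hev : ∀ᶠ n in atTop, ((d n - 0 : ℕ) : ℝ) / ((n - d n + 0 + 1 : ℕ) : ℝ) ≤ q :=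
      hqn.eventually (eventually_le_nhds hρq)
    filter_upwards [hev] with n hn k
    simp only [Nat.sub_zero, Nat.add_zero] at hn
    rw [hf]
    by_cases hk : k ≤ d n
    · simp only [hk, if_pos]
      have heq : (n.choose (d n - k) : ℝ) / (n.choose (d n) : ℝ)
          = ∏ j ∈ Finset.range k, ((d n - j : ℕ) : ℝ) / ((n - d n + j + 1 : ℕ) : ℝ) := by
        rw [choose_ratio_prod n (d n) (hdn n) k hk]
        rw [mul_comm, mul_div_assoc, div_self (ne_of_gt (hchoosepos n)), mul_one]
      rw [heq, Real.norm_of_nonneg (Finset.prod_nonneg fun j _ => by positivity)]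
      calc ∏ j ∈ Finset.range k, ((d n - j : ℕ) : ℝ) / ((n - d n + j + 1 : ℕ) : ℝ)
          ≤ ∏ _j ∈ Finset.range k, q := by
            apply Finset.prod_le_prod (fun j _ => by positivity)
            intro j _
            have hnum : ((d n - j : ℕ) : ℝ) ≤ (d n : ℝ) := by
              exact_mod_cast Nat.sub_le _ _
            have hden : ((n - d n + 1 : ℕ) : ℝ) ≤ ((n - d n + j + 1 : ℕ) : ℝ) := by
              exact_mod_cast Nat.add_le_add (Nat.add_le_add_left (Nat.zero_le j) _) le_rfl
            have hdenpos : (0:ℝ) < ((n - d n + 1 : ℕ) : ℝ) := by positivity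
            calc ((d n - j : ℕ) : ℝ) / ((n - d n + j + 1 : ℕ) : ℝ)
                ≤ (d n : ℝ) / ((n - d n + 1 : ℕ) : ℝ) :=
                  div_le_div₀ (Nat.cast_nonneg _) hnum hdenpos hden
              _ ≤ q := hn
        _ = q ^ k := by rw [Finset.prod_const, Finset.card_range]
    · simp only [hk, if_neg, not_false_iff, norm_zero]
      positivity
  -- dominated convergence
  have hsum_bound : Summable (fun k : ℕ => q ^ k) := summable_geometric_of_lt_one hq0.le hq1
  have hmain : Tendsto (fun n => ∑' k, f n k) atTop (nhds (∑' k, ρ ^ k)) :=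
    tendsto_tsum_of_dominated_convergence hsum_bound hab h_bound
  rw [tsum_geometric_of_lt_one hρ0.le hρ1] at hmain
  have hfinal := hmain.const_mul (2:ℝ)
  have hval : 2 * (1 - ρ)⁻¹ = 2 * (1 - δ) / (1 - 2 * δ) := by
    have h1δ' : (1:ℝ) - δ ≠ 0 := ne_of_gt h1δ
    have hstep : 1 - ρ = (1 - 2 * δ) / (1 - δ) := by
      rw [hρ]
      field_simp
      ring
    rw [hstep, inv_div, mul_div_assoc]
  rw [hval] at hfinal
  refine hfinal.congr ?_
  intro n
  have htsum : ∑' k, f n k = ∑ k ∈ Finset.range (d n + 1), f n k := by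
    apply tsum_eq_sum
    intro k hk
    rw [Finset.mem_range, not_lt] at hk
    rw [hf]
    simp only [if_neg (by omega : ¬ k ≤ d n)]
  have hsum2 : ∑ k ∈ Finset.range (d n + 1), f n k
      = ∑ l ∈ Finset.range (d n + 1), (n.choose l : ℝ) / (n.choose (d n) : ℝ) := by
    rw [show (∑ l ∈ Finset.range (d n + 1), (n.choose l : ℝ) / (n.choose (d n) : ℝ))
        = ∑ k ∈ Finset.range (d n + 1),
          (n.choose (d n + 1 - 1 - k) : ℝ) / (n.choose (d n) : ℝ) from
      (Finset.sum_range_reflect (fun l => (n.choose l : ℝ) / (n.choose (d n) : ℝ)) (d n + 1)).symm]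
    apply Finset.sum_congr rfl
    intro k hk
    rw [Finset.mem_range] at hk
    rw [hf]
    simp only [if_pos (by omega : k ≤ d n)]
    have h5 : d n + 1 - 1 - k = d n - k := by omega
    rw [h5]
  rw [htsum, hsum2, ← Finset.sum_div, mul_div_assoc]
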